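/- The absolute linear Harbourne constant for 4 lines equals −4/3: for every field K and every configuration 𝓛 of 4 mutually distinct lines in the projective plane over K, H_L(K,𝓛) ≥ −4/3, and there exists a configuration 𝓛 of 4 mutually distinct lines in the projective plane over ℂ with H_L(ℂ,𝓛) = −4/3. -/

import Mathlib

open Projectivization Module


/-- Points of the projective plane over `K`. -/
abbrev PPoint (K : Type*) [Field K] := Projectivization K (Fin 3 → K)

/-- Lines of the projective plane over `K`: points of the projectivization of the dual space. -/
abbrev PLine (K : Type*) [Field K] := Projectivization K (Module.Dual K (Fin 3 → K))

/-- A point lies on a line iff a representative functional of the line vanishes on a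
representative vector of the point. -/
def OnLine {K : Type*} [Field K] (P : PPoint K) (L : PLine K) : Prop :=
  L.rep P.rep = 0

/-- The multiplicity of a point `P` with respect to a configuration `𝓛`:
the number of lines of `𝓛` passing through `P`. -/
noncomputable def mult {K : Type*} [Field K] (𝓛 : Finset (PLine K)) (P : PPoint K) : ℕ :=
  {L : PLine K | L ∈ 𝓛 ∧ OnLine P L}.ncard

/-- The singular points of a configuration: points lying on at least two of its lines. -/
def SingPts {K : Type*} [Field K] (𝓛 : Finset (PLine K)) : Set (PPoint K) :=
  {P | 2 ≤ mult 𝓛 P}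

/-- `tk 𝓛 k` is the number of points of multiplicity exactly `k` (used for `k ≥ 2`). -/
noncomputable def tk {K : Type*} [Field K] (𝓛 : Finset (PLine K)) (k : ℕ) : ℕ :=
  {P : PPoint K | mult 𝓛 P = k}.ncard

/-- The linear Harbourne constant of a configuration `𝓛` of lines:
`(d² − Σ_P m_𝓛(P)²)/s` where the sum runs over the `s` singular points of `𝓛`. -/
noncomputable def HL {K : Type*} [Field K] (𝓛 : Finset (PLine K)) : ℚ :=
  ((𝓛.card : ℚ) ^ 2 - ∑ᶠ P ∈ SingPts 𝓛, (mult 𝓛 P : ℚ) ^ 2) / ((SingPts 𝓛).ncard : ℚ)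

section Aux
variable {K : Type*} [Field K]

lemma onLine_mk_left {v : Fin 3 → K} (hv : v ≠ 0) (L : PLine K) :
    OnLine (mk K v hv) L ↔ L.rep v = 0 := by
  obtain ⟨a, ha⟩ := (mk_eq_mk_iff K _ _ (mk K v hv).rep_nonzero hv).1 (mk_rep (mk K v hv))
  unfold OnLine
  rw [← ha, Units.smul_def, map_smul, smul_eq_mul]
  simp

lemma rep_mk_dual {φ : Module.Dual K (Fin 3 → K)} (hφ : φ ≠ 0) :
    ∃ b : Kˣ, ∀ x, (mk K φ hφ).rep x = (b : K) * φ x := by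
  obtain ⟨b, hb⟩ := (mk_eq_mk_iff K _ _ (mk K φ hφ).rep_nonzero hφ).1 (mk_rep (mk K φ hφ))
  exact ⟨b, fun x => by rw [← hb]; simp [Units.smul_def]⟩

lemma onLine_mk_right {φ : Module.Dual K (Fin 3 → K)} (hφ : φ ≠ 0) (P : PPoint K) :
    OnLine P (mk K φ hφ) ↔ φ P.rep = 0 := by
  obtain ⟨b, hb⟩ := rep_mk_dual hφ
  unfold OnLine
  rw [hb]
  simp

lemma onLine_mk {v : Fin 3 → K} (hv : v ≠ 0) {φ : Module.Dual K (Fin 3 → K)} (hφ : φ ≠ 0) :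
    OnLine (mk K v hv) (mk K φ hφ) ↔ φ v = 0 := by
  rw [onLine_mk_right hφ]
  obtain ⟨a, ha⟩ := (mk_eq_mk_iff K _ _ (mk K v hv).rep_nonzero hv).1 (mk_rep (mk K v hv))
  rw [← ha, Units.smul_def, map_smul, smul_eq_mul]
  simp

lemma ker_finrank_two {φ : Module.Dual K (Fin 3 → K)} (hφ : φ ≠ 0) :
    Module.finrank K (LinearMap.ker φ) = 2 := by
  have hr : LinearMap.range φ = ⊤ := by
    rw [LinearMap.range_eq_top]
    obtain ⟨u, hu⟩ : ∃ u, φ u ≠ 0 := by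
      by_contra h
      push_neg at h
      exact hφ (LinearMap.ext fun x => h x)
    intro c
    exact ⟨(c / φ u) • u, by rw [map_smul, smul_eq_mul, div_mul_cancel₀ _ hu]⟩
  have := LinearMap.finrank_range_add_finrank_ker φ
  rw [hr, finrank_top] at this
  simp [Module.finrank_self, Module.finrank_fin_fun] at this
  omega

lemma exists_onLine_inter (L M : PLine K) : ∃ P : PPoint K, OnLine P L ∧ OnLine P M := by
  set φ := L.rep
  set ψ := M.rep
  have h1 : Module.finrank K (LinearMap.ker φ) = 2 := ker_finrank_two L.rep_nonzero
  have h2 : Module.finrank K (LinearMap.ker ψ) = 2 := ker_finrank_two M.rep_nonzero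
  have hsup : Module.finrank K ((LinearMap.ker φ) ⊔ (LinearMap.ker ψ) : Submodule K (Fin 3 → K)) ≤ 3 := by
    have := Submodule.finrank_le ((LinearMap.ker φ) ⊔ (LinearMap.ker ψ) : Submodule K (Fin 3 → K))
    simpa [Module.finrank_fin_fun] using this
  have key := Submodule.finrank_sup_add_finrank_inf_eq (LinearMap.ker φ) (LinearMap.ker ψ)
  have hinf : 1 ≤ Module.finrank K ((LinearMap.ker φ) ⊓ (LinearMap.ker ψ) : Submodule K (Fin 3 → K)) := by omega
  have hbot : ((LinearMap.ker φ) ⊓ (LinearMap.ker ψ) : Submodule K (Fin 3 → K)) ≠ ⊥ := by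
    intro hb
    rw [hb] at hinf
    simp [finrank_bot] at hinf
  obtain ⟨v, hv, hvne⟩ := Submodule.exists_mem_ne_zero_of_ne_bot hbot
  obtain ⟨hv1, hv2⟩ := Submodule.mem_inf.1 hv
  refine ⟨mk K v hvne, ?_, ?_⟩ <;> rw [onLine_mk_left]
  · exact hv1
  · exact hv2

lemma onLine_unique {L M : PLine K} (h : L ≠ M) {P Q : PPoint K}
    (hPL : OnLine P L) (hPM : OnLine P M) (hQL : OnLine Q L) (hQM : OnLine Q M) : P = Q := by
  by_contra hPQ
  set φ := L.rep with hφdef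
  set ψ := M.rep with hψdef
  set v := P.rep
  set w := Q.rep
  -- v, w linearly independent
  have hli : LinearIndependent K ![v, w] := by
    rw [linearIndependent_fin2]
    refine ⟨Q.rep_nonzero, fun a ha => ?_⟩
    simp only [Matrix.cons_val_one, Matrix.head_cons, Matrix.cons_val_zero] at ha
    have hane : a ≠ 0 := by
      rintro rfl
      rw [zero_smul] at ha
      exact P.rep_nonzero ha.symm
    apply hPQ
    rw [← mk_rep P, ← mk_rep Q]
    exact (mk_eq_mk_iff K _ _ _ _).2 ⟨Units.mk0 a hane, ha⟩
  have hsp : Module.finrank K (Submodule.span K {v, w}) = 2 := by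
    have := finrank_span_eq_card hli
    have hr : Set.range ![v, w] = {v, w} := by
      ext x
      simp only [Set.mem_range, Fin.exists_fin_two, Matrix.cons_val_zero, Matrix.cons_val_one, Matrix.head_cons, Set.mem_insert_iff, Set.mem_singleton_iff]
      tauto
    rw [hr] at this
    simpa using this
  have hker : ∀ (ρ : Module.Dual K (Fin 3 → K)), ρ ≠ 0 → ρ v = 0 → ρ w = 0 →
      LinearMap.ker ρ = Submodule.span K {v, w} := by
    intro ρ hρ h1 h2
    refine (Submodule.eq_of_le_of_finrank_eq ?_ ?_).symm
    · rw [Submodule.span_le]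
      rintro x (rfl | rfl)
      · exact h1
      · exact h2
    · rw [hsp, ker_finrank_two hρ]
  have hkerφψ : LinearMap.ker φ = LinearMap.ker ψ := by
    rw [hker φ L.rep_nonzero hPL hQL, hker ψ M.rep_nonzero hPM hQM]
  -- functionals with equal kernels are proportional
  obtain ⟨u, hu⟩ : ∃ u, φ u ≠ 0 := by
    by_contra hcon
    push_neg at hcon
    exact L.rep_nonzero (LinearMap.ext fun x => hcon x)
  have hψu : ψ u ≠ 0 := by
    intro h0
    have : u ∈ LinearMap.ker φ := hkerφψ ▸ (LinearMap.mem_ker.2 h0)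
    exact hu this
  have hc : (ψ u / φ u) • φ = ψ := by
    refine LinearMap.ext fun x => ?_
    have hy : φ (x - (φ x / φ u) • u) = 0 := by
      rw [map_sub, map_smul, smul_eq_mul, div_mul_cancel₀ _ hu, sub_self]
    have hy2 : ψ (x - (φ x / φ u) • u) = 0 := by
      have : (x - (φ x / φ u) • u) ∈ LinearMap.ker φ := LinearMap.mem_ker.2 hy
      rw [hkerφψ] at this
      exact this
    rw [map_sub, map_smul, smul_eq_mul, sub_eq_zero] at hy2
    rw [LinearMap.smul_apply, smul_eq_mul, hy2]
    field_simp
  obtain ⟨c, hcne, hc2⟩ : ∃ c : K, c ≠ 0 ∧ c • φ = ψ := ⟨_, div_ne_zero hψu hu, hc⟩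
  apply h
  rw [← mk_rep L, ← mk_rep M]
  refine (mk_eq_mk_iff K _ _ _ _).2 ⟨(Units.mk0 c hcne)⁻¹, ?_⟩
  rw [Units.smul_def, ← hψdef, ← hφdef, ← hc2, smul_smul]
  simp [inv_mul_cancel₀ hcne]


open scoped Classical in
lemma mult_eq_filter_card (𝓛 : Finset (PLine K)) (P : PPoint K) :
    mult 𝓛 P = (𝓛.filter fun L => OnLine P L).card := by
  rw [mult, ← Set.ncard_coe_finset]
  congr 1
  ext L
  simp

noncomputable def ipt (L M : PLine K) : PPoint K := (exists_onLine_inter L M).choose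

lemma ipt_spec (L M : PLine K) : OnLine (ipt L M) L ∧ OnLine (ipt L M) M :=
  (exists_onLine_inter L M).choose_spec

lemma two_le_mult {𝓛 : Finset (PLine K)} {P : PPoint K} {L M : PLine K}
    (hL : L ∈ 𝓛) (hM : M ∈ 𝓛) (h : L ≠ M) (h1 : OnLine P L) (h2 : OnLine P M) :
    2 ≤ mult 𝓛 P := by
  have hsub : ({L, M} : Set (PLine K)) ⊆ {L' | L' ∈ 𝓛 ∧ OnLine P L'} := by
    rintro x (rfl | rfl) <;> exact ⟨by assumption, by assumption⟩
  have hfin : {L' : PLine K | L' ∈ 𝓛 ∧ OnLine P L'}.Finite :=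
    (𝓛.finite_toSet).subset (fun x hx => hx.1)
  calc 2 = ({L, M} : Set (PLine K)).ncard := (Set.ncard_pair h).symm
    _ ≤ _ := Set.ncard_le_ncard hsub hfin

lemma exists_two_of_sing {𝓛 : Finset (PLine K)} {P : PPoint K} (h : P ∈ SingPts 𝓛) :
    ∃ L M, L ∈ 𝓛 ∧ M ∈ 𝓛 ∧ L ≠ M ∧ OnLine P L ∧ OnLine P M := by
  have hfin : {L' : PLine K | L' ∈ 𝓛 ∧ OnLine P L'}.Finite :=
    (𝓛.finite_toSet).subset (fun x hx => hx.1)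
  have : 1 < mult 𝓛 P := h
  rw [mult, Set.one_lt_ncard_iff hfin] at this
  obtain ⟨L, M, hL, hM, hne⟩ := this
  exact ⟨L, M, hL.1, hM.1, hne, hL.2, hM.2⟩

open scoped Classical in
lemma sing_counting (𝓛 : Finset (PLine K)) :
    ∃ S : Finset (PPoint K), (↑S : Set (PPoint K)) = SingPts 𝓛 ∧
      ∑ P ∈ S, (mult 𝓛 P * mult 𝓛 P - mult 𝓛 P) = 𝓛.card * 𝓛.card - 𝓛.card := by
  refine ⟨Finset.image (fun p => ipt p.1 p.2) 𝓛.offDiag, ?_, ?_⟩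
  · ext P
    simp only [Finset.coe_image, Set.mem_image, Finset.mem_coe, Finset.mem_offDiag]
    constructor
    · rintro ⟨⟨L, M⟩, ⟨hL, hM, hne⟩, rfl⟩
      exact two_le_mult hL hM hne (ipt_spec L M).1 (ipt_spec L M).2
    · intro hP
      obtain ⟨L, M, hL, hM, hne, h1, h2⟩ := exists_two_of_sing hP
      exact ⟨(L, M), ⟨hL, hM, hne⟩,
        onLine_unique hne (ipt_spec L M).1 (ipt_spec L M).2 h1 h2⟩
  · set S := Finset.image (fun p : PLine K × PLine K => ipt p.1 p.2) 𝓛.offDiag with hS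
    have hmap : ∀ p ∈ 𝓛.offDiag, ipt p.1 p.2 ∈ S := fun p hp =>
      Finset.mem_image_of_mem _ hp
    have hcard := Finset.card_eq_sum_card_fiberwise hmap
    have hfib : ∀ P ∈ S, (𝓛.offDiag.filter fun p => ipt p.1 p.2 = P).card
        = mult 𝓛 P * mult 𝓛 P - mult 𝓛 P := by
      intro P _
      have : 𝓛.offDiag.filter (fun p => ipt p.1 p.2 = P)
          = (𝓛.filter fun L => OnLine P L).offDiag := by
        ext ⟨L, M⟩
        simp only [Finset.mem_filter, Finset.mem_offDiag]
        constructor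
        · rintro ⟨⟨hL, hM, hne⟩, rfl⟩
          exact ⟨⟨hL, (ipt_spec L M).1⟩, ⟨hM, (ipt_spec L M).2⟩, hne⟩
        · rintro ⟨⟨hL, h1⟩, ⟨hM, h2⟩, hne⟩
          exact ⟨⟨hL, hM, hne⟩, onLine_unique hne (ipt_spec L M).1 (ipt_spec L M).2 h1 h2⟩
      rw [this, Finset.offDiag_card, ← mult_eq_filter_card]
    rw [Finset.sum_congr rfl hfib] at hcard
    rw [← hcard, Finset.offDiag_card]

lemma HL_lower (𝓛 : Finset (PLine K)) (hd : 𝓛.card = 4) : -4/3 ≤ HL 𝓛 := by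
  obtain ⟨S, hSeq, hsum⟩ := sing_counting 𝓛
  rw [hd] at hsum
  obtain ⟨L, hL, M, hM, hLM⟩ := Finset.one_lt_card.1 (by omega : 1 < 𝓛.card)
  have hPsing : ipt L M ∈ SingPts 𝓛 :=
    two_le_mult hL hM hLM (ipt_spec L M).1 (ipt_spec L M).2
  have hSne : S.Nonempty := ⟨ipt L M, by rw [← Finset.mem_coe, hSeq]; exact hPsing⟩
  have hm2 : ∀ P ∈ S, 2 ≤ mult 𝓛 P := by
    intro P hP
    have : P ∈ SingPts 𝓛 := by rw [← hSeq]; exact hP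
    exact this
  have hQ : ∑ P ∈ S, ((mult 𝓛 P : ℚ)^2 - (mult 𝓛 P : ℚ)) = 12 := by
    have hcast := congrArg (Nat.cast : ℕ → ℚ) hsum
    rw [Nat.cast_sum] at hcast
    norm_num at hcast
    rw [← hcast]
    refine Finset.sum_congr rfl fun P hP => ?_
    have h2 := hm2 P hP
    have hle : mult 𝓛 P ≤ mult 𝓛 P * mult 𝓛 P := Nat.le_mul_of_pos_left _ (by omega)
    rw [Nat.cast_sub hle]
    push_cast
    ring
  have hpt : ∀ P ∈ S, 3 * (mult 𝓛 P : ℚ) - 4 ≤ (mult 𝓛 P : ℚ)^2 - (mult 𝓛 P : ℚ) := by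
    intro P hP
    have h2 : (2 : ℚ) ≤ (mult 𝓛 P : ℚ) := by exact_mod_cast hm2 P hP
    nlinarith [sq_nonneg ((mult 𝓛 P : ℚ) - 2)]
  have hsum2 : ∑ P ∈ S, (3 * (mult 𝓛 P : ℚ) - 4) ≤ 12 := by
    rw [← hQ]
    exact Finset.sum_le_sum hpt
  have hA : 3 * (∑ P ∈ S, (mult 𝓛 P : ℚ)) - 4 * S.card ≤ 12 := by
    rw [Finset.sum_sub_distrib, Finset.sum_const, ← Finset.mul_sum] at hsum2
    simp only [nsmul_eq_mul] at hsum2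
    linarith
  have hB : ∑ P ∈ S, (mult 𝓛 P : ℚ)^2 = 12 + ∑ P ∈ S, (mult 𝓛 P : ℚ) := by
    rw [← hQ, Finset.sum_sub_distrib]
    ring
  have hs0 : (0 : ℚ) < S.card := by
    exact_mod_cast Finset.card_pos.2 hSne
  rw [HL, ← hSeq, finsum_mem_coe_finset, Set.ncard_coe_finset, hd, hB,
    le_div_iff₀ hs0]
  push_cast
  linarith

lemma pt_ne_auto {v w : Fin 3 → K} (hv : v ≠ 0) (hw : w ≠ 0)
    (h : ¬ (v 0 * w 1 = v 1 * w 0 ∧ v 0 * w 2 = v 2 * w 0 ∧ v 1 * w 2 = v 2 * w 1)) :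
    mk K v hv ≠ mk K w hw := by
  intro heq
  obtain ⟨a, ha⟩ := (mk_eq_mk_iff K _ _ hv hw).1 heq
  apply h
  have h' : ∀ i, v i = (a : K) * w i := fun i => by rw [← ha]; simp [Units.smul_def]
  refine ⟨?_, ?_, ?_⟩ <;> simp only [h'] <;> ring

lemma line_ne {φ ψ : Module.Dual K (Fin 3 → K)} (hφ : φ ≠ 0) (hψ : ψ ≠ 0) (x y : Fin 3 → K)
    (h : φ x * ψ y ≠ φ y * ψ x) : mk K φ hφ ≠ mk K ψ hψ := by
  intro heq
  obtain ⟨a, ha⟩ := (mk_eq_mk_iff K _ _ hφ hψ).1 heq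
  apply h
  have h' : ∀ z, φ z = (a : K) * ψ z := fun z => by rw [← ha]; simp [Units.smul_def]
  rw [h' x, h' y]; ring

noncomputable def ff0 : Module.Dual ℂ (Fin 3 → ℂ) := LinearMap.proj 0
noncomputable def ff1 : Module.Dual ℂ (Fin 3 → ℂ) := LinearMap.proj 1
noncomputable def ff2 : Module.Dual ℂ (Fin 3 → ℂ) := LinearMap.proj 2
noncomputable def ff3 : Module.Dual ℂ (Fin 3 → ℂ) := ff0 + ff1 + ff2

lemma hff0 : ff0 ≠ 0 := by
  intro h; have := LinearMap.congr_fun h ![1,1,1]; norm_num [ff0, LinearMap.proj_apply] at this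
lemma hff1 : ff1 ≠ 0 := by
  intro h; have := LinearMap.congr_fun h ![1,1,1]; norm_num [ff1, LinearMap.proj_apply] at this
lemma hff2 : ff2 ≠ 0 := by
  intro h; have := LinearMap.congr_fun h ![1,1,1]; norm_num [Matrix.cons_val_two, ff2, LinearMap.proj_apply] at this
lemma hff3 : ff3 ≠ 0 := by
  intro h; have := LinearMap.congr_fun h ![1,1,1]
  norm_num [Matrix.cons_val_two, ff0, ff1, ff2, ff3, LinearMap.proj_apply] at this

noncomputable def LL0 : PLine ℂ := Projectivization.mk ℂ ff0 hff0
noncomputable def LL1 : PLine ℂ := Projectivization.mk ℂ ff1 hff1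
noncomputable def LL2 : PLine ℂ := Projectivization.mk ℂ ff2 hff2
noncomputable def LL3 : PLine ℂ := Projectivization.mk ℂ ff3 hff3

noncomputable def uu1 : Fin 3 → ℂ := ![0,0,1]
noncomputable def uu2 : Fin 3 → ℂ := ![0,1,0]
noncomputable def uu3 : Fin 3 → ℂ := ![1,0,0]
noncomputable def uu4 : Fin 3 → ℂ := ![0,1,-1]
noncomputable def uu5 : Fin 3 → ℂ := ![1,0,-1]
noncomputable def uu6 : Fin 3 → ℂ := ![1,-1,0]

lemma huu1 : uu1 ≠ 0 := by intro h; have := congrFun h 2; norm_num [Matrix.cons_val_two, uu1] at this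
lemma huu2 : uu2 ≠ 0 := by intro h; have := congrFun h 1; norm_num [uu2] at this
lemma huu3 : uu3 ≠ 0 := by intro h; have := congrFun h 0; norm_num [uu3] at this
lemma huu4 : uu4 ≠ 0 := by intro h; have := congrFun h 1; norm_num [uu4] at this
lemma huu5 : uu5 ≠ 0 := by intro h; have := congrFun h 0; norm_num [uu5] at this
lemma huu6 : uu6 ≠ 0 := by intro h; have := congrFun h 0; norm_num [uu6] at this

noncomputable def PP1 : PPoint ℂ := Projectivization.mk ℂ uu1 huu1
noncomputable def PP2 : PPoint ℂ := Projectivization.mk ℂ uu2 huu2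
noncomputable def PP3 : PPoint ℂ := Projectivization.mk ℂ uu3 huu3
noncomputable def PP4 : PPoint ℂ := Projectivization.mk ℂ uu4 huu4
noncomputable def PP5 : PPoint ℂ := Projectivization.mk ℂ uu5 huu5
noncomputable def PP6 : PPoint ℂ := Projectivization.mk ℂ uu6 huu6

open scoped Classical in
noncomputable def LS : Finset (PLine ℂ) := {LL0, LL1, LL2, LL3}

open scoped Classical in
lemma HL_example : ∃ 𝓛 : Finset (PLine ℂ), 𝓛.card = 4 ∧ HL 𝓛 = -4/3 := by
  -- line distinctness
  have hL01 : LL0 ≠ LL1 := line_ne hff0 hff1 ![1,0,0] ![0,1,0]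
    (by norm_num [ff0, ff1, LinearMap.proj_apply])
  have hL02 : LL0 ≠ LL2 := line_ne hff0 hff2 ![1,0,0] ![0,0,1]
    (by norm_num [Matrix.cons_val_two, ff0, ff2, LinearMap.proj_apply])
  have hL03 : LL0 ≠ LL3 := line_ne hff0 hff3 ![1,0,0] ![0,1,0]
    (by norm_num [Matrix.cons_val_two, ff0, ff1, ff2, ff3, LinearMap.proj_apply])
  have hL12 : LL1 ≠ LL2 := line_ne hff1 hff2 ![0,1,0] ![0,0,1]
    (by norm_num [Matrix.cons_val_two, ff1, ff2, LinearMap.proj_apply])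
  have hL13 : LL1 ≠ LL3 := line_ne hff1 hff3 ![0,1,0] ![1,0,0]
    (by norm_num [Matrix.cons_val_two, ff0, ff1, ff2, ff3, LinearMap.proj_apply])
  have hL23 : LL2 ≠ LL3 := line_ne hff2 hff3 ![0,0,1] ![1,0,0]
    (by norm_num [Matrix.cons_val_two, ff0, ff1, ff2, ff3, LinearMap.proj_apply])
  have hmem : ∀ L : PLine ℂ, L ∈ LS ↔ L = LL0 ∨ L = LL1 ∨ L = LL2 ∨ L = LL3 := by
    intro L; simp [LS]
  have mLL0 : LL0 ∈ LS := (hmem LL0).2 (Or.inl rfl)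
  have mLL1 : LL1 ∈ LS := (hmem LL1).2 (Or.inr (Or.inl rfl))
  have mLL2 : LL2 ∈ LS := (hmem LL2).2 (Or.inr (Or.inr (Or.inl rfl)))
  have mLL3 : LL3 ∈ LS := (hmem LL3).2 (Or.inr (Or.inr (Or.inr rfl)))
  have hcard4 : LS.card = 4 := by
    rw [LS, Finset.card_insert_of_notMem (by simp [hL01, hL02, hL03]),
      Finset.card_insert_of_notMem (by simp [hL12, hL13]),
      Finset.card_insert_of_notMem (by simp [hL23]), Finset.card_singleton]
  -- incidences
  have o10 : OnLine PP1 LL0 := (onLine_mk huu1 hff0).2 (by norm_num [uu1, ff0, LinearMap.proj_apply])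
  have o11 : OnLine PP1 LL1 := (onLine_mk huu1 hff1).2 (by norm_num [uu1, ff1, LinearMap.proj_apply])
  have o20 : OnLine PP2 LL0 := (onLine_mk huu2 hff0).2 (by norm_num [uu2, ff0, LinearMap.proj_apply])
  have o22 : OnLine PP2 LL2 := (onLine_mk huu2 hff2).2 (by norm_num [Matrix.cons_val_two, uu2, ff2, LinearMap.proj_apply])
  have o31 : OnLine PP3 LL1 := (onLine_mk huu3 hff1).2 (by norm_num [uu3, ff1, LinearMap.proj_apply])
  have o32 : OnLine PP3 LL2 := (onLine_mk huu3 hff2).2 (by norm_num [Matrix.cons_val_two, uu3, ff2, LinearMap.proj_apply])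
  have o40 : OnLine PP4 LL0 := (onLine_mk huu4 hff0).2 (by norm_num [uu4, ff0, LinearMap.proj_apply])
  have o43 : OnLine PP4 LL3 := (onLine_mk huu4 hff3).2
    (by norm_num [Matrix.cons_val_two, uu4, ff0, ff1, ff2, ff3, LinearMap.proj_apply])
  have o51 : OnLine PP5 LL1 := (onLine_mk huu5 hff1).2 (by norm_num [uu5, ff1, LinearMap.proj_apply])
  have o53 : OnLine PP5 LL3 := (onLine_mk huu5 hff3).2
    (by norm_num [Matrix.cons_val_two, uu5, ff0, ff1, ff2, ff3, LinearMap.proj_apply])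
  have o62 : OnLine PP6 LL2 := (onLine_mk huu6 hff2).2 (by norm_num [Matrix.cons_val_two, uu6, ff2, LinearMap.proj_apply])
  have o63 : OnLine PP6 LL3 := (onLine_mk huu6 hff3).2
    (by norm_num [Matrix.cons_val_two, uu6, ff0, ff1, ff2, ff3, LinearMap.proj_apply])
  -- non-incidences
  have n12 : ¬ OnLine PP1 LL2 := fun h => by
    have := (onLine_mk huu1 hff2).1 h; norm_num [Matrix.cons_val_two, uu1, ff2, LinearMap.proj_apply] at this
  have n13 : ¬ OnLine PP1 LL3 := fun h => by
    have := (onLine_mk huu1 hff3).1 h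
    norm_num [Matrix.cons_val_two, uu1, ff0, ff1, ff2, ff3, LinearMap.proj_apply] at this
  have n21 : ¬ OnLine PP2 LL1 := fun h => by
    have := (onLine_mk huu2 hff1).1 h; norm_num [uu2, ff1, LinearMap.proj_apply] at this
  have n23 : ¬ OnLine PP2 LL3 := fun h => by
    have := (onLine_mk huu2 hff3).1 h
    norm_num [Matrix.cons_val_two, uu2, ff0, ff1, ff2, ff3, LinearMap.proj_apply] at this
  have n30 : ¬ OnLine PP3 LL0 := fun h => by
    have := (onLine_mk huu3 hff0).1 h; norm_num [uu3, ff0, LinearMap.proj_apply] at this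
  have n33 : ¬ OnLine PP3 LL3 := fun h => by
    have := (onLine_mk huu3 hff3).1 h
    norm_num [Matrix.cons_val_two, uu3, ff0, ff1, ff2, ff3, LinearMap.proj_apply] at this
  have n41 : ¬ OnLine PP4 LL1 := fun h => by
    have := (onLine_mk huu4 hff1).1 h; norm_num [uu4, ff1, LinearMap.proj_apply] at this
  have n42 : ¬ OnLine PP4 LL2 := fun h => by
    have := (onLine_mk huu4 hff2).1 h; norm_num [Matrix.cons_val_two, uu4, ff2, LinearMap.proj_apply] at this
  have n50 : ¬ OnLine PP5 LL0 := fun h => by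
    have := (onLine_mk huu5 hff0).1 h; norm_num [uu5, ff0, LinearMap.proj_apply] at this
  have n52 : ¬ OnLine PP5 LL2 := fun h => by
    have := (onLine_mk huu5 hff2).1 h; norm_num [Matrix.cons_val_two, uu5, ff2, LinearMap.proj_apply] at this
  have n60 : ¬ OnLine PP6 LL0 := fun h => by
    have := (onLine_mk huu6 hff0).1 h; norm_num [uu6, ff0, LinearMap.proj_apply] at this
  have n61 : ¬ OnLine PP6 LL1 := fun h => by
    have := (onLine_mk huu6 hff1).1 h; norm_num [uu6, ff1, LinearMap.proj_apply] at this
  -- multiplicities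
  have hset1 : {L : PLine ℂ | L ∈ LS ∧ OnLine PP1 L} = {LL0, LL1} := by
    ext L
    simp only [Set.mem_setOf_eq, hmem, Set.mem_insert_iff, Set.mem_singleton_iff]
    constructor
    · rintro ⟨(rfl | rfl | rfl | rfl), hon⟩
      · exact Or.inl rfl
      · exact Or.inr rfl
      · exact absurd hon n12
      · exact absurd hon n13
    · rintro (rfl | rfl)
      · exact ⟨Or.inl rfl, o10⟩
      · exact ⟨Or.inr (Or.inl rfl), o11⟩
  have hset2 : {L : PLine ℂ | L ∈ LS ∧ OnLine PP2 L} = {LL0, LL2} := by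
    ext L
    simp only [Set.mem_setOf_eq, hmem, Set.mem_insert_iff, Set.mem_singleton_iff]
    constructor
    · rintro ⟨(rfl | rfl | rfl | rfl), hon⟩
      · exact Or.inl rfl
      · exact absurd hon n21
      · exact Or.inr rfl
      · exact absurd hon n23
    · rintro (rfl | rfl)
      · exact ⟨Or.inl rfl, o20⟩
      · exact ⟨Or.inr (Or.inr (Or.inl rfl)), o22⟩
  have hset3 : {L : PLine ℂ | L ∈ LS ∧ OnLine PP3 L} = {LL1, LL2} := by
    ext L
    simp only [Set.mem_setOf_eq, hmem, Set.mem_insert_iff, Set.mem_singleton_iff]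
    constructor
    · rintro ⟨(rfl | rfl | rfl | rfl), hon⟩
      · exact absurd hon n30
      · exact Or.inl rfl
      · exact Or.inr rfl
      · exact absurd hon n33
    · rintro (rfl | rfl)
      · exact ⟨Or.inr (Or.inl rfl), o31⟩
      · exact ⟨Or.inr (Or.inr (Or.inl rfl)), o32⟩
  have hset4 : {L : PLine ℂ | L ∈ LS ∧ OnLine PP4 L} = {LL0, LL3} := by
    ext L
    simp only [Set.mem_setOf_eq, hmem, Set.mem_insert_iff, Set.mem_singleton_iff]
    constructor
    · rintro ⟨(rfl | rfl | rfl | rfl), hon⟩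
      · exact Or.inl rfl
      · exact absurd hon n41
      · exact absurd hon n42
      · exact Or.inr rfl
    · rintro (rfl | rfl)
      · exact ⟨Or.inl rfl, o40⟩
      · exact ⟨Or.inr (Or.inr (Or.inr rfl)), o43⟩
  have hset5 : {L : PLine ℂ | L ∈ LS ∧ OnLine PP5 L} = {LL1, LL3} := by
    ext L
    simp only [Set.mem_setOf_eq, hmem, Set.mem_insert_iff, Set.mem_singleton_iff]
    constructor
    · rintro ⟨(rfl | rfl | rfl | rfl), hon⟩
      · exact absurd hon n50
      · exact Or.inl rfl
      · exact absurd hon n52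
      · exact Or.inr rfl
    · rintro (rfl | rfl)
      · exact ⟨Or.inr (Or.inl rfl), o51⟩
      · exact ⟨Or.inr (Or.inr (Or.inr rfl)), o53⟩
  have hset6 : {L : PLine ℂ | L ∈ LS ∧ OnLine PP6 L} = {LL2, LL3} := by
    ext L
    simp only [Set.mem_setOf_eq, hmem, Set.mem_insert_iff, Set.mem_singleton_iff]
    constructor
    · rintro ⟨(rfl | rfl | rfl | rfl), hon⟩
      · exact absurd hon n60
      · exact absurd hon n61
      · exact Or.inl rfl
      · exact Or.inr rfl
    · rintro (rfl | rfl)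
      · exact ⟨Or.inr (Or.inr (Or.inl rfl)), o62⟩
      · exact ⟨Or.inr (Or.inr (Or.inr rfl)), o63⟩
  have hm1 : mult LS PP1 = 2 := by rw [mult, hset1]; exact Set.ncard_pair hL01
  have hm2 : mult LS PP2 = 2 := by rw [mult, hset2]; exact Set.ncard_pair hL02
  have hm3 : mult LS PP3 = 2 := by rw [mult, hset3]; exact Set.ncard_pair hL12
  have hm4 : mult LS PP4 = 2 := by rw [mult, hset4]; exact Set.ncard_pair hL03
  have hm5 : mult LS PP5 = 2 := by rw [mult, hset5]; exact Set.ncard_pair hL13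
  have hm6 : mult LS PP6 = 2 := by rw [mult, hset6]; exact Set.ncard_pair hL23
  -- point distinctness
  have p12 : PP1 ≠ PP2 := pt_ne_auto huu1 huu2 (by norm_num [Matrix.cons_val_two, uu1, uu2])
  have p13 : PP1 ≠ PP3 := pt_ne_auto huu1 huu3 (by norm_num [Matrix.cons_val_two, uu1, uu3])
  have p14 : PP1 ≠ PP4 := pt_ne_auto huu1 huu4 (by norm_num [Matrix.cons_val_two, uu1, uu4])
  have p15 : PP1 ≠ PP5 := pt_ne_auto huu1 huu5 (by norm_num [Matrix.cons_val_two, uu1, uu5])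
  have p16 : PP1 ≠ PP6 := pt_ne_auto huu1 huu6 (by norm_num [Matrix.cons_val_two, uu1, uu6])
  have p23 : PP2 ≠ PP3 := pt_ne_auto huu2 huu3 (by norm_num [uu2, uu3])
  have p24 : PP2 ≠ PP4 := pt_ne_auto huu2 huu4 (by norm_num [Matrix.cons_val_two, uu2, uu4])
  have p25 : PP2 ≠ PP5 := pt_ne_auto huu2 huu5 (by norm_num [uu2, uu5])
  have p26 : PP2 ≠ PP6 := pt_ne_auto huu2 huu6 (by norm_num [uu2, uu6])
  have p34 : PP3 ≠ PP4 := pt_ne_auto huu3 huu4 (by norm_num [uu3, uu4])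
  have p35 : PP3 ≠ PP5 := pt_ne_auto huu3 huu5 (by norm_num [Matrix.cons_val_two, uu3, uu5])
  have p36 : PP3 ≠ PP6 := pt_ne_auto huu3 huu6 (by norm_num [uu3, uu6])
  have p45 : PP4 ≠ PP5 := pt_ne_auto huu4 huu5 (by norm_num [uu4, uu5])
  have p46 : PP4 ≠ PP6 := pt_ne_auto huu4 huu6 (by norm_num [uu4, uu6])
  have p56 : PP5 ≠ PP6 := pt_ne_auto huu5 huu6 (by norm_num [uu5, uu6])
  set S : Finset (PPoint ℂ) := {PP1, PP2, PP3, PP4, PP5, PP6} with hSdef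
  have hScard : S.card = 6 := by
    rw [hSdef, Finset.card_insert_of_notMem (by simp [p12, p13, p14, p15, p16]),
      Finset.card_insert_of_notMem (by simp [p23, p24, p25, p26]),
      Finset.card_insert_of_notMem (by simp [p34, p35, p36]),
      Finset.card_insert_of_notMem (by simp [p45, p46]),
      Finset.card_insert_of_notMem (by simp [p56]), Finset.card_singleton]
  have hSmem : ∀ P : PPoint ℂ, P ∈ S ↔
      P = PP1 ∨ P = PP2 ∨ P = PP3 ∨ P = PP4 ∨ P = PP5 ∨ P = PP6 := by
    intro P; simp [hSdef]
  have hsing : SingPts LS = ↑S := by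
    ext P
    rw [Finset.mem_coe, hSmem]
    constructor
    · intro hP
      obtain ⟨L, M, hL, hM, hne, h1, h2⟩ := exists_two_of_sing hP
      rw [hmem] at hL hM
      rcases hL with rfl | rfl | rfl | rfl <;> rcases hM with rfl | rfl | rfl | rfl
      · exact absurd rfl hne
      · exact Or.inl (onLine_unique hne h1 h2 o10 o11)
      · exact Or.inr (Or.inl (onLine_unique hne h1 h2 o20 o22))
      · exact Or.inr (Or.inr (Or.inr (Or.inl (onLine_unique hne h1 h2 o40 o43))))
      · exact Or.inl (onLine_unique hne h1 h2 o11 o10)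
      · exact absurd rfl hne
      · exact Or.inr (Or.inr (Or.inl (onLine_unique hne h1 h2 o31 o32)))
      · exact Or.inr (Or.inr (Or.inr (Or.inr (Or.inl (onLine_unique hne h1 h2 o51 o53)))))
      · exact Or.inr (Or.inl (onLine_unique hne h1 h2 o22 o20))
      · exact Or.inr (Or.inr (Or.inl (onLine_unique hne h1 h2 o32 o31)))
      · exact absurd rfl hne
      · exact Or.inr (Or.inr (Or.inr (Or.inr (Or.inr (onLine_unique hne h1 h2 o62 o63)))))
      · exact Or.inr (Or.inr (Or.inr (Or.inl (onLine_unique hne h1 h2 o43 o40))))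
      · exact Or.inr (Or.inr (Or.inr (Or.inr (Or.inl (onLine_unique hne h1 h2 o53 o51)))))
      · exact Or.inr (Or.inr (Or.inr (Or.inr (Or.inr (onLine_unique hne h1 h2 o63 o62)))))
      · exact absurd rfl hne
    · rintro (rfl | rfl | rfl | rfl | rfl | rfl)
      · exact two_le_mult mLL0 mLL1 hL01 o10 o11
      · exact two_le_mult mLL0 mLL2 hL02 o20 o22
      · exact two_le_mult mLL1 mLL2 hL12 o31 o32
      · exact two_le_mult mLL0 mLL3 hL03 o40 o43
      · exact two_le_mult mLL1 mLL3 hL13 o51 o53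
      · exact two_le_mult mLL2 mLL3 hL23 o62 o63
  refine ⟨LS, hcard4, ?_⟩
  rw [HL, hsing, finsum_mem_coe_finset, Set.ncard_coe_finset, hcard4, hScard]
  have hsum : ∑ P ∈ S, (mult LS P : ℚ)^2 = ∑ _P ∈ S, (4 : ℚ) := by
    refine Finset.sum_congr rfl fun P hP => ?_
    rw [hSmem] at hP
    rcases hP with rfl | rfl | rfl | rfl | rfl | rfl <;>
      simp [hm1, hm2, hm3, hm4, hm5, hm6] <;> norm_num
  rw [hsum, Finset.sum_const, hScard]
  norm_num

end Aux

/-- The absolute linear Harbourne constant for `4` lines equals `−4/3`. -/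
theorem HL_four_lines :
    (∀ (K : Type*) [Field K] (𝓛 : Finset (PLine K)), 𝓛.card = 4 → -4/3 ≤ HL 𝓛) ∧
    (∃ 𝓛 : Finset (PLine ℂ), 𝓛.card = 4 ∧ HL 𝓛 = -4/3) :=
  ⟨fun K _ 𝓛 hd => HL_lower 𝓛 hd, HL_example⟩
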